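/- Let (Ω, F, P) be a probability space and G ⊆ F a sub-σ-algebra. Fix r ≥ 1, a finite index set I, real weights (w_j)_{j∈I}, and finitely many time indices t ∈ T. Suppose that for each t ∈ T there are G-measurable random vectors u_t : Ω → ℝ^r and v_n, v_j : Ω → ℝ^r (j ∈ I), and integrable real random variables ε_{tn}, ε_{tj} with E[ε_{tn} | G] = 0 and E[ε_{tj} | G] = 0 almost surely. Define Y_{tn} = ⟨u_t, v_n⟩ + ε_{tn} and Y_{tj} = ⟨u_t, v_j⟩ + ε_{tj}, and assume all these random variables are integrable. If v_n = Σ_{j∈I} w_j v_j almost surely, then almost surely: (i) for every t ∈ T, E[Y_{tn} | G] = Σ_{j∈I} w_j E[Y_{tj} | G]; and (ii) (1/|T|) Σ_{t∈T} E[Y_{tn} | G] = (1/|T|) Σ_{t∈T} Σ_{j∈I} w_j E[Y_{tj} | G]. -/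

import Mathlib

open MeasureTheory ProbabilityTheory
open scoped RealInnerProductSpace

/-- **Identification theorem of the synthetic interventions framework.**
Under the latent factor model `Y = ⟨u, v⟩ + ε` with shocks having zero conditional
mean given the sub-σ-algebra `G` of latent factors, and the linear span inclusion
`v_n = ∑ j, w j • v j`, the conditional expectation of the target unit's outcome is
identified, at every time `t`, by the `w`-weighted combination of the donors'
conditional expectations, and hence so is the average over the post-intervention
times. -/
theorem synthetic_interventions_identification
    {Ω : Type*} {F : MeasurableSpace Ω} {P : Measure Ω} [IsProbabilityMeasure P]
    {G : MeasurableSpace Ω} (hG : G ≤ F)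
    {r : ℕ} (hr : 1 ≤ r)
    {ι : Type*} [Fintype ι] (w : ι → ℝ)
    {τ : Type*} [Fintype τ] [Nonempty τ]
    (u : τ → Ω → EuclideanSpace ℝ (Fin r))
    (vn : Ω → EuclideanSpace ℝ (Fin r)) (v : ι → Ω → EuclideanSpace ℝ (Fin r))
    (hu : ∀ t, StronglyMeasurable[G] (u t))
    (hvn : StronglyMeasurable[G] vn) (hv : ∀ j, StronglyMeasurable[G] (v j))
    (εn : τ → Ω → ℝ) (ε : τ → ι → Ω → ℝ)
    (hεn_int : ∀ t, Integrable (εn t) P) (hε_int : ∀ t j, Integrable (ε t j) P)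
    (hεn : ∀ t, P[εn t|G] =ᵐ[P] 0)
    (hε : ∀ t j, P[ε t j|G] =ᵐ[P] 0)
    (Yn : τ → Ω → ℝ) (Y : τ → ι → Ω → ℝ)
    (hYn : ∀ t ω, Yn t ω = ⟪u t ω, vn ω⟫ + εn t ω)
    (hY : ∀ t j ω, Y t j ω = ⟪u t ω, v j ω⟫ + ε t j ω)
    (hYn_int : ∀ t, Integrable (Yn t) P) (hY_int : ∀ t j, Integrable (Y t j) P)
    (hspan : ∀ᵐ ω ∂P, vn ω = ∑ j, w j • v j ω) :
    (∀ t, P[Yn t|G] =ᵐ[P] fun ω => ∑ j, w j * (P[Y t j|G]) ω) ∧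
      ((fun ω => (Fintype.card τ : ℝ)⁻¹ * ∑ t, (P[Yn t|G]) ω)
        =ᵐ[P] fun ω => (Fintype.card τ : ℝ)⁻¹ * ∑ t, ∑ j, w j * (P[Y t j|G]) ω) := by
  have key : ∀ t, P[Yn t|G] =ᵐ[P] fun ω => ∑ j, w j * (P[Y t j|G]) ω := by
    intro t
    -- inner products are integrable
    have hin_int : Integrable (fun ω => ⟪u t ω, vn ω⟫) P := by
      have := (hYn_int t).sub (hεn_int t)
      refine this.congr (Filter.Eventually.of_forall fun ω => ?_)
      simp [hYn t ω]
    have hiv_int : ∀ j, Integrable (fun ω => ⟪u t ω, v j ω⟫) P := by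
      intro j
      have := (hY_int t j).sub (hε_int t j)
      refine this.congr (Filter.Eventually.of_forall fun ω => ?_)
      simp [hY t j ω]
    have hCn : P[Yn t|G] =ᵐ[P] fun ω => ⟪u t ω, vn ω⟫ := by
      have h1 : P[Yn t|G] =ᵐ[P] (P[fun ω => ⟪u t ω, vn ω⟫|G]) + P[εn t|G] := by
        refine (condExp_congr_ae (Filter.Eventually.of_forall fun ω => hYn t ω)).trans ?_
        exact condExp_add hin_int (hεn_int t) G
      have heq : P[fun ω => ⟪u t ω, vn ω⟫|G] = fun ω => ⟪u t ω, vn ω⟫ :=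
        condExp_of_stronglyMeasurable hG ((hu t).inner hvn) hin_int
      refine h1.trans ?_
      rw [heq]
      filter_upwards [hεn t] with ω hω
      simp [Pi.add_apply, hω]
    have hC : ∀ j, (P[Y t j|G]) =ᵐ[P] fun ω => ⟪u t ω, v j ω⟫ := by
      intro j
      have h1 : P[Y t j|G] =ᵐ[P] (P[fun ω => ⟪u t ω, v j ω⟫|G]) + P[ε t j|G] := by
        refine (condExp_congr_ae (Filter.Eventually.of_forall fun ω => hY t j ω)).trans ?_
        exact condExp_add (hiv_int j) (hε_int t j) G
      have heq : P[fun ω => ⟪u t ω, v j ω⟫|G] = fun ω => ⟪u t ω, v j ω⟫ :=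
        condExp_of_stronglyMeasurable hG ((hu t).inner (hv j)) (hiv_int j)
      refine h1.trans ?_
      rw [heq]
      filter_upwards [hε t j] with ω hω
      simp [Pi.add_apply, hω]
    have hsum : ∀ᵐ ω ∂P, ∀ j, (P[Y t j|G]) ω = ⟪u t ω, v j ω⟫ := by
      rw [MeasureTheory.ae_all_iff]
      exact fun j => hC j
    filter_upwards [hCn, hsum, hspan] with ω h1 h2 h3
    rw [h1, h3]
    simp only [inner_sum, real_inner_smul_right]
    exact Finset.sum_congr rfl fun j _ => by rw [h2 j]
  refine ⟨key, ?_⟩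
  have : ∀ᵐ ω ∂P, ∀ t, (P[Yn t|G]) ω = ∑ j, w j * (P[Y t j|G]) ω := by
    rw [MeasureTheory.ae_all_iff]; exact fun t => key t
  filter_upwards [this] with ω h
  simp only [Finset.sum_congr rfl fun t _ => h t]
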